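/- Let A be the quotient ring ℂ[X, Y, Z, T]/(X·Y - T·Z) and let P ⊆ A be the ideal generated by the residue classes of Y and T. Then P is a prime ideal, and for every integer k ≥ 1 the power P^k is a P-primary ideal (that is, P^k is primary with radical P; equivalently, the k-th symbolic power of P coincides with P^k). -/

import Mathlib

open MvPolynomial

/-- The coordinate ring `A = ℂ[X, Y, Z, T] / (X·Y - T·Z)` of the quadric cone, where the
variables `X, Y, Z, T` are indexed by `0, 1, 2, 3 : Fin 4`. -/
@[reducible]
def QuadricCone : Type :=
  MvPolynomial (Fin 4) ℂ ⧸
    Ideal.span {(X 0 : MvPolynomial (Fin 4) ℂ) * X 1 - X 3 * X 2}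

/-- The ideal `P ⊆ A` generated by the residue classes of `Y` and `T`, cutting out the
plane `B = {y = t = 0}` inside the quadric cone `{xy = tz}`. -/
noncomputable def QuadricCone.P : Ideal QuadricCone :=
  Ideal.span
    {Ideal.Quotient.mk _ (X 1 : MvPolynomial (Fin 4) ℂ),
     Ideal.Quotient.mk _ (X 3 : MvPolynomial (Fin 4) ℂ)}


section
open Polynomial
set_option maxRecDepth 4000


noncomputable section
abbrev R4 : Type := MvPolynomial (Fin 4) ℂ
abbrev D3 : Type := MvPolynomial (Fin 3) ℂ

def fq : R4 := (X 0 : R4) * X 1 - X 3 * X 2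

def gq : Polynomial D3 := Polynomial.C (X 0 : D3) * Polynomial.X - Polynomial.C ((X 2 : D3) * X 1)

lemma X_ne' (i : Fin 3) : (X i : D3) ≠ 0 := MvPolynomial.X_ne_zero i

lemma primeX0 : Prime (X 0 : D3) := by
  rw [← MulEquiv.prime_iff (MvPolynomial.finSuccEquiv ℂ 2).toMulEquiv]
  have : (MvPolynomial.finSuccEquiv ℂ 2).toMulEquiv (X 0 : D3) = Polynomial.X := by
    simp [MvPolynomial.finSuccEquiv_X_zero]
  rw [this]
  exact Polynomial.prime_X

lemma gq_coeff1 : gq.coeff 1 = (X 0 : D3) := by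
  simp [gq, Polynomial.coeff_sub, Polynomial.coeff_C]

lemma gq_coeff0 : gq.coeff 0 = -((X 2 : D3) * X 1) := by
  simp [gq, Polynomial.coeff_sub, Polynomial.coeff_C]

lemma X0_not_dvd : ¬ (X 0 : D3) ∣ (X 2 : D3) * X 1 := by
  intro h
  have hp : Prime (X 0 : D3) := primeX0
  rcases hp.2.2 _ _ h with h' | h'
  · obtain ⟨t, ht⟩ := h'
    have := congrArg (MvPolynomial.aeval (fun i : Fin 3 => if i = 0 then 0 else 1 : Fin 3 → ℂ)) ht
    simp at this
  · obtain ⟨t, ht⟩ := h'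
    have := congrArg (MvPolynomial.aeval (fun i : Fin 3 => if i = 0 then 0 else 1 : Fin 3 → ℂ)) ht
    simp at this

lemma gq_primitive : gq.IsPrimitive := by
  intro r hr
  obtain ⟨h, hh⟩ := hr
  have h1 : r ∣ (X 0 : D3) := by
    have : gq.coeff 1 = r * h.coeff 1 := by rw [hh]; simp
    exact ⟨h.coeff 1, by rw [← gq_coeff1, this]⟩
  have h0 : r ∣ ((X 2 : D3) * X 1) := by
    have : gq.coeff 0 = r * h.coeff 0 := by rw [hh]; simp
    exact ⟨-h.coeff 0, by rw [← neg_neg ((X 2 : D3) * X 1), ← gq_coeff0, this]; ring⟩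
  have hp : Prime (X 0 : D3) := primeX0
  obtain ⟨s, hs⟩ := h1
  rcases hp.irreducible.isUnit_or_isUnit hs with h' | h'
  · exact h'
  · exfalso
    apply X0_not_dvd
    obtain ⟨u, hu⟩ := h'
    exact dvd_trans ⟨u⁻¹.1, by rw [hs, ← hu]; simp [mul_assoc]⟩ h0

lemma gq_prime : Prime gq := by
  letI : NormalizationMonoid D3 := UniqueFactorizationMonoid.strongNormalizationMonoid.toNormalizationMonoid
  letI : NormalizedGCDMonoid D3 := UniqueFactorizationMonoid.toNormalizedGCDMonoid D3
  rw [← UniqueFactorizationMonoid.irreducible_iff_prime]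
  rw [gq_primitive.irreducible_iff_irreducible_map_fraction_map (K := FractionRing D3)]
  apply Polynomial.irreducible_of_degree_eq_one
  have hX0 : algebraMap D3 (FractionRing D3) (X 0) ≠ 0 := by
    intro h
    exact X_ne' 0 ((map_eq_zero_iff _ (IsFractionRing.injective D3 (FractionRing D3))).mp h)
  simp only [gq, Polynomial.map_sub, Polynomial.map_mul, Polynomial.map_C, Polynomial.map_X]
  compute_degree!

lemma efq : (MvPolynomial.finSuccEquiv ℂ 3) fq = gq := by
  have h1 : (1 : Fin 4) = Fin.succ 0 := rfl
  have h2 : (2 : Fin 4) = Fin.succ 1 := rfl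
  have h3 : (3 : Fin 4) = Fin.succ 2 := rfl
  simp only [fq, gq, map_sub, map_mul, h1, h2, h3, MvPolynomial.finSuccEquiv_X_zero,
    MvPolynomial.finSuccEquiv_X_succ, map_mul]
  ring

lemma fq_prime : Prime fq := by
  rw [← MulEquiv.prime_iff (MvPolynomial.finSuccEquiv ℂ 3).toMulEquiv]
  show Prime ((MvPolynomial.finSuccEquiv ℂ 3) fq)
  rw [efq]; exact gq_prime

lemma span_fq_prime : (Ideal.span {fq} : Ideal R4).IsPrime :=
  (Ideal.span_singleton_prime fq_prime.ne_zero).mpr fq_prime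

def wdeg (d : Fin 4 →₀ ℕ) : ℕ := d 1 + d 3

def ev (i : Fin 4) : ℕ := if i = 1 then 1 else if i = 3 then 1 else 0

lemma wdeg_single_add (j : Fin 4) (n : ℕ) (d : Fin 4 →₀ ℕ) :
    wdeg (Finsupp.single j n + d) = n * ev j + wdeg d := by
  simp only [wdeg, Finsupp.add_apply, Finsupp.single_apply, ev]
  fin_cases j <;> simp <;> ring

def Phi : R4 →ₐ[ℂ] Polynomial R4 :=
  MvPolynomial.aeval (fun i => Polynomial.C (X i) * Polynomial.X ^ (ev i))

lemma Phi_X (i : Fin 4) : Phi (X i) = Polynomial.C (X i) * Polynomial.X ^ (ev i) := by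
  simp [Phi]

lemma Phi_monomial (d : Fin 4 →₀ ℕ) (c : ℂ) :
    Phi (monomial d c) = Polynomial.C (monomial d c) * Polynomial.X ^ (wdeg d) := by
  induction d using Finsupp.induction with
  | zero =>
      simp only [monomial_zero', wdeg]
      show Phi (MvPolynomial.C c) = _
      rw [show Phi (MvPolynomial.C c) = algebraMap ℂ (Polynomial R4) c from MvPolynomial.aeval_C _ c,
        Polynomial.algebraMap_apply, MvPolynomial.algebraMap_eq]
      simp
  | single_add j n d hjd hn ih =>
      rw [monomial_single_add, map_mul, map_pow, Phi_X, wdeg_single_add, ih, map_mul,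
        mul_pow, ← Polynomial.C_pow, ← pow_mul]
      ring

def mId : Ideal R4 := Ideal.span {(X 1 : R4), X 3}

lemma X1_mem : (X 1 : R4) ∈ mId := Ideal.subset_span (by simp)
lemma X3_mem : (X 3 : R4) ∈ mId := Ideal.subset_span (by simp)

lemma monomial_mem_pow (k : ℕ) : ∀ (d : Fin 4 →₀ ℕ) (c : ℂ), k ≤ wdeg d →
    monomial d c ∈ mId ^ k := by
  induction k with
  | zero => intro d c _; simp
  | succ k ih =>
      intro d c h
      have hj : 1 ≤ d 1 ∨ 1 ≤ d 3 := by
        unfold wdeg at h; omega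
      have key : ∀ j : Fin 4, (X j : R4) ∈ mId → ev j = 1 → 1 ≤ d j →
          monomial d c ∈ mId ^ (k + 1) := by
        intro j hjm hevj hdj
        have hle : Finsupp.single j 1 ≤ d := by
          rw [Finsupp.le_def]
          intro i
          rcases eq_or_ne i j with rfl | hij
          · simpa using hdj
          · simp [Finsupp.single_apply, Ne.symm hij]
        have hd : Finsupp.single j 1 + (d - Finsupp.single j 1) = d :=
          add_tsub_cancel_of_le hle
        have hwd : wdeg d = 1 + wdeg (d - Finsupp.single j 1) := by
          conv_lhs => rw [← hd]
          rw [wdeg_single_add, hevj]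
        have h2 : (monomial d c : R4) = (X j : R4) * MvPolynomial.monomial (d - Finsupp.single j 1) c := by
          conv_lhs => rw [← hd]
          rw [monomial_single_add, pow_one]
        rw [h2, pow_succ']
        exact Ideal.mul_mem_mul hjm (ih _ _ (by omega))
      rcases hj with hj | hj
      · exact key 1 X1_mem rfl hj
      · exact key 3 X3_mem rfl hj

lemma coeff_Phi_mem (p : R4) (i : ℕ) : (Phi p).coeff i ∈ mId ^ i := by
  induction p using MvPolynomial.induction_on' with
  | monomial d c =>
      rw [Phi_monomial, Polynomial.coeff_C_mul, Polynomial.coeff_X_pow]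
      rcases eq_or_ne i (wdeg d) with rfl | h
      · simpa using monomial_mem_pow _ d c le_rfl
      · simp [h]
  | add p q hp hq =>
      rw [map_add, Polynomial.coeff_add]
      exact Ideal.add_mem _ hp hq

def rho : R4 →ₐ[ℂ] R4 :=
  MvPolynomial.aeval (fun i => if i = 1 then 0 else if i = 3 then 0 else X i)

lemma rho_X1 : rho (X 1) = 0 := by simp [rho]
lemma rho_X3 : rho (X 3) = 0 := by simp [rho]

lemma sub_rho_mem (p : R4) : p - rho p ∈ mId := by
  induction p using MvPolynomial.induction_on with
  | C c => simp [rho]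
  | add p q hp hq =>
      have : p + q - rho (p + q) = (p - rho p) + (q - rho q) := by rw [map_add]; ring
      rw [this]; exact Ideal.add_mem _ hp hq
  | mul_X p i hp =>
      fin_cases i
      · show p * X (0 : Fin 4) - rho (p * X (0 : Fin 4)) ∈ mId
        have : p * X 0 - rho (p * X 0) = (p - rho p) * X 0 := by
          rw [map_mul]; simp [rho]; ring
        rw [this]; exact Ideal.mul_mem_right _ _ hp
      · show p * X (1 : Fin 4) - rho (p * X (1 : Fin 4)) ∈ mId
        exact Ideal.sub_mem _ (Ideal.mul_mem_left _ _ X1_mem) (by rw [map_mul, rho_X1, mul_zero]; exact Ideal.zero_mem _)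
      · show p * X (2 : Fin 4) - rho (p * X (2 : Fin 4)) ∈ mId
        have : p * X 2 - rho (p * X 2) = (p - rho p) * X 2 := by
          rw [map_mul]; simp [rho]; ring
        rw [this]; exact Ideal.mul_mem_right _ _ hp
      · show p * X (3 : Fin 4) - rho (p * X (3 : Fin 4)) ∈ mId
        exact Ideal.sub_mem _ (Ideal.mul_mem_left _ _ X3_mem) (by rw [map_mul, rho_X3, mul_zero]; exact Ideal.zero_mem _)

lemma mem_mId_iff (p : R4) : p ∈ mId ↔ rho p = 0 := by
  constructor
  · intro hp
    have h0 : ∀ q ∈ mId, rho q = 0 := by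
      intro q hq
      refine Submodule.span_induction ?_ ?_ ?_ ?_ hq
      · rintro x hx
        rcases hx with rfl | hx
        · exact rho_X1
        · rw [Set.mem_singleton_iff] at hx; rw [hx]; exact rho_X3
      · simp
      · intro x y _ _ hx hy; rw [map_add, hx, hy, add_zero]
      · intro c x _ hx; rw [smul_eq_mul, map_mul, hx, mul_zero]
    exact h0 p hp
  · intro hp
    have := sub_rho_mem p
    rwa [hp, sub_zero] at this

lemma eval1_Phi (p : R4) : Polynomial.eval 1 (Phi p) = p := by
  induction p using MvPolynomial.induction_on with
  | C c =>
      rw [show Phi (MvPolynomial.C c) = algebraMap ℂ (Polynomial R4) c from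
        MvPolynomial.aeval_C _ c, Polynomial.algebraMap_apply, MvPolynomial.algebraMap_eq,
        Polynomial.eval_C]
  | add p q hp hq => rw [map_add, Polynomial.eval_add, hp, hq]
  | mul_X p i hp =>
      rw [map_mul, Polynomial.eval_mul, hp, Phi_X, Polynomial.eval_mul, Polynomial.eval_C,
        Polynomial.eval_pow, Polynomial.eval_X, one_pow, mul_one]

lemma coeff0_Phi (p : R4) : (Phi p).coeff 0 = rho p := by
  induction p using MvPolynomial.induction_on with
  | C c =>
      rw [show Phi (MvPolynomial.C c) = algebraMap ℂ (Polynomial R4) c from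
        MvPolynomial.aeval_C _ c, Polynomial.algebraMap_apply, MvPolynomial.algebraMap_eq]
      simp [rho]
  | add p q hp hq => rw [map_add, Polynomial.coeff_add, hp, hq, map_add]
  | mul_X p i hp =>
      rw [map_mul, Polynomial.mul_coeff_zero, hp, Phi_X, Polynomial.mul_coeff_zero,
        Polynomial.coeff_C_zero, map_mul]
      congr 1
      rw [Polynomial.coeff_X_pow]
      fin_cases i <;> simp [rho, ev]

def fI : Ideal R4 := Ideal.span {fq}

lemma fq_mem_mId : fq ∈ mId := by
  have h1 : (X 0 : R4) * X 1 ∈ mId := Ideal.mul_mem_left _ _ X1_mem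
  have h2 : (X 3 : R4) * X 2 ∈ mId := Ideal.mul_mem_right _ _ X3_mem
  exact Ideal.sub_mem _ h1 h2

lemma rho_idem (p : R4) : rho (rho p) = rho p := by
  have : rho.comp rho = rho := by
    apply MvPolynomial.algHom_ext
    intro i
    fin_cases i <;> simp [rho]
  have h := DFunLike.congr_fun this p
  simpa using h

lemma Phi_coeff_zero_of_mem {k : ℕ} {q : R4} (hq : q ∈ mId ^ k) {i : ℕ} (hik : i < k) :
    (Phi q).coeff i = 0 := by
  have h1 : Ideal.map (Phi : R4 →+* Polynomial R4) mId ≤ Ideal.span {(Polynomial.X : Polynomial R4)} := by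
    rw [mId, Ideal.map_span]
    apply Ideal.span_le.mpr
    rintro x ⟨y, hy, rfl⟩
    rcases hy with rfl | hy
    · exact Ideal.mem_span_singleton.mpr ⟨Polynomial.C (X 1), by show Phi (X 1) = _; rw [Phi_X, show ev 1 = 1 from rfl, pow_one]; ring⟩
    · rw [Set.mem_singleton_iff] at hy; subst hy
      exact Ideal.mem_span_singleton.mpr ⟨Polynomial.C (X 3), by show Phi (X 3) = _; rw [Phi_X, show ev 3 = 1 from rfl, pow_one]; ring⟩
  have h2 : Phi q ∈ Ideal.span {(Polynomial.X : Polynomial R4) ^ k} := by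
    rw [← Ideal.span_singleton_pow]
    have : Phi q ∈ (Ideal.map (Phi : R4 →+* Polynomial R4) mId) ^ k := by
      rw [← Ideal.map_pow]
      exact Ideal.mem_map_of_mem _ hq
    exact Ideal.pow_right_mono h1 k this
  obtain ⟨h, hh⟩ := Ideal.mem_span_singleton.mp h2
  rw [hh, Polynomial.X_pow_mul, Polynomial.coeff_mul_X_pow', if_neg (by omega)]

lemma hPhifq : Phi fq = Polynomial.C fq * Polynomial.X := by
  simp only [fq, map_sub, map_mul, Phi_X, show ev 0 = 0 from rfl, show ev 1 = 1 from rfl,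
    show ev 2 = 0 from rfl, show ev 3 = 1 from rfl, pow_zero, pow_one, mul_one,
    Polynomial.C_mul]
  ring

lemma keylemma (k : ℕ) (a b : R4) (hab : a * b ∈ mId ^ k ⊔ fI) (hb : b ∉ mId) :
    a ∈ mId ^ k ⊔ fI := by
  obtain ⟨q, hq, r, hr, hqr⟩ := Submodule.mem_sup.mp hab
  obtain ⟨r', rfl⟩ := Ideal.mem_span_singleton'.mp hr
  have hb0' : rho b ∉ fI := by
    intro h
    have hle : fI ≤ mId := by
      rw [fI]; exact Ideal.span_le.mpr (by simpa using fq_mem_mId)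
    have h1 : rho b ∈ mId := hle h
    rw [mem_mId_iff, rho_idem] at h1
    exact hb ((mem_mId_iff b).mpr h1)
  have claim : ∀ i, i < k → (Phi a).coeff i ∈ fI := by
    intro i
    induction i using Nat.strong_induction_on with
    | _ i IH =>
      intro hik
      have hmul : ((Phi a) * (Phi b)).coeff i ∈ fI := by
        rw [← map_mul, ← hqr, map_add, map_mul, hPhifq, Polynomial.coeff_add,
          Phi_coeff_zero_of_mem hq hik, zero_add,
          show Phi r' * (Polynomial.C fq * Polynomial.X) =
            Polynomial.C fq * (Phi r' * Polynomial.X) by ring,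
          Polynomial.coeff_C_mul]
        exact Ideal.mem_span_singleton.mpr (dvd_mul_right _ _)
      rw [Polynomial.coeff_mul] at hmul
      have hmem : ((i, 0) : ℕ × ℕ) ∈ Finset.HasAntidiagonal.antidiagonal i := by
        simp [Finset.mem_antidiagonal]
      have hsplit := Finset.sum_erase_add (Finset.HasAntidiagonal.antidiagonal i)
        (fun x => (Phi a).coeff x.1 * (Phi b).coeff x.2) hmem
      have hrest : ∑ x ∈ (Finset.HasAntidiagonal.antidiagonal i).erase (i, 0),
          (Phi a).coeff x.1 * (Phi b).coeff x.2 ∈ fI := by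
        apply Ideal.sum_mem
        intro x hx
        have hx1 := Finset.HasAntidiagonal.mem_antidiagonal.mp (Finset.mem_of_mem_erase hx)
        have hxne := Finset.ne_of_mem_erase hx
        have hx1i : x.1 < i := by
          rcases lt_or_ge x.1 i with h | h
          · exact h
          · exfalso; apply hxne
            have : x.1 = i := by omega
            have : x.2 = 0 := by omega
            exact Prod.ext (by omega) this
        exact Ideal.mul_mem_right _ _ (IH x.1 hx1i (by omega))
      have hlast : (Phi a).coeff i * (Phi b).coeff 0 ∈ fI := by
        have : (Phi a).coeff i * (Phi b).coeff 0 =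
            (∑ x ∈ Finset.HasAntidiagonal.antidiagonal i, (Phi a).coeff x.1 * (Phi b).coeff x.2) -
            ∑ x ∈ (Finset.HasAntidiagonal.antidiagonal i).erase (i, 0),
              (Phi a).coeff x.1 * (Phi b).coeff x.2 := by
          rw [← hsplit]; ring
        rw [this]
        exact Ideal.sub_mem _ hmul hrest
      rcases span_fq_prime.mem_or_mem hlast with h | h
      · exact h
      · rw [coeff0_Phi] at h
        exact absurd h hb0'
  have ha : a = ∑ i ∈ Finset.range ((Phi a).natDegree + 1), (Phi a).coeff i := by
    conv_lhs => rw [← eval1_Phi a]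
    rw [Polynomial.eval_eq_sum_range]
    simp
  rw [ha]
  apply Ideal.sum_mem
  intro i _
  rcases lt_or_ge i k with h | h
  · exact Submodule.mem_sup_right (claim i h)
  · exact Submodule.mem_sup_left (Ideal.pow_le_pow_right h (coeff_Phi_mem a i))

lemma mId_prime : mId.IsPrime := by
  have : mId = RingHom.ker (rho : R4 →+* R4) := by
    ext p
    rw [mem_mId_iff]
    rfl
  rw [this]
  exact RingHom.ker_isPrime _

abbrev piq : R4 →+* (R4 ⧸ fI) := Ideal.Quotient.mk fI

lemma ker_piq : RingHom.ker piq = fI := Ideal.mk_ker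

theorem main :
    (Ideal.map piq mId).IsPrime ∧
      ∀ k : ℕ, 1 ≤ k →
        ((Ideal.map piq mId) ^ k).IsPrimary ∧
          ((Ideal.map piq mId) ^ k).radical = Ideal.map piq mId := by
  have hsurj : Function.Surjective piq := Ideal.Quotient.mk_surjective
  have hker : RingHom.ker piq ≤ mId := by
    rw [ker_piq, fI]
    exact Ideal.span_le.mpr (by simpa using fq_mem_mId)
  haveI := mId_prime
  have hPprime : (Ideal.map piq mId).IsPrime := Ideal.map_isPrime_of_surjective hsurj hker
  refine ⟨hPprime, fun k hk => ?_⟩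
  have hrad : ((Ideal.map piq mId) ^ k).radical = Ideal.map piq mId := by
    have hk0 : k ≠ 0 := by omega
    rw [Ideal.radical_pow _ hk0, hPprime.radical]
  refine ⟨(Ideal.isPrimary_iff).mpr ⟨?_, ?_⟩, hrad⟩
  · intro htop
    apply hPprime.ne_top
    rw [eq_top_iff, ← htop]
    exact Ideal.pow_le_self (by omega)
  · intro x y hxy
    rw [hrad]
    by_cases hy : y ∈ Ideal.map piq mId
    · exact Or.inr hy
    · left
      obtain ⟨a, rfl⟩ := hsurj x
      obtain ⟨b, rfl⟩ := hsurj y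
      have hb : b ∉ mId := fun hbm => hy (Ideal.mem_map_of_mem _ hbm)
      have hab : a * b ∈ mId ^ k ⊔ fI := by
        have h1 : piq (a * b) ∈ Ideal.map piq (mId ^ k) := by
          rw [Ideal.map_pow]
          rw [map_mul]
          exact hxy
        have h2 := Ideal.comap_map_of_surjective piq hsurj (mId ^ k)
        have h3 : a * b ∈ Ideal.comap piq (Ideal.map piq (mId ^ k)) := h1
        rw [h2] at h3
        rwa [← RingHom.ker_eq_comap_bot, ker_piq] at h3
      have := keylemma k a b hab hb
      have h4 : a ∈ Ideal.comap piq (Ideal.map piq (mId ^ k)) := by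
        rw [Ideal.comap_map_of_surjective piq hsurj, ← RingHom.ker_eq_comap_bot, ker_piq]
        exact this
      rw [← Ideal.map_pow]
      exact h4


theorem quadricCone_plane_ideal_powers_primary' :
    QuadricCone.P.IsPrime ∧
      ∀ k : ℕ, 1 ≤ k →
        (QuadricCone.P ^ k).IsPrimary ∧ (QuadricCone.P ^ k).radical = QuadricCone.P := by
  have hP : QuadricCone.P = Ideal.map piq mId := by
    rw [QuadricCone.P, mId, Ideal.map_span, Set.image_insert_eq, Set.image_singleton]
    rfl
  rw [hP]
  exact main

end
end

/-- **Verification of the paper's technical condition (Section 3, first example).**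
In `A = ℂ[X, Y, Z, T]/(X·Y - T·Z)`, the ideal `P = (Y, T)` is prime, and for every `k ≥ 1`
the power `P ^ k` is a `P`-primary ideal (it is primary with radical `P`); equivalently the
`k`-th symbolic power of `P` coincides with `P ^ k`. -/
theorem quadricCone_plane_ideal_powers_primary :
    QuadricCone.P.IsPrime ∧
      ∀ k : ℕ, 1 ≤ k →
        (QuadricCone.P ^ k).IsPrimary ∧ (QuadricCone.P ^ k).radical = QuadricCone.P := by
  exact quadricCone_plane_ideal_powers_primary'
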